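/- Let p be a prime, r ≥ 1, and let φ be a unitary representation of SL₄(ℤ/p^rℤ) on a finite-dimensional complex inner product space V. Suppose there exists a nonzero vector v ∈ V such that for all integers x, y, z, φ([x;y;z]) v = exp(2πi y/p^r) · v. Then there exists a nonzero vector w ∈ V fixed by φ(g) for every g ∈ G₂, where G₂ is the subgroup of SL₄(ℤ/p^rℤ) consisting of matrices with 1 in positions (1,1) and (4,4), an arbitrary SL₂(ℤ/p^rℤ) block in rows and columns 2, 3, and 0 in all other off-diagonal positions. -/

import Mathlib

open Matrix

/-- The matrix `[x;y;z]` in SL₄(ℤ/p^r): the identity except for entries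
`x, z, y` in positions (2,3), (2,4), (3,4) (1-indexed). -/
def xyzMat (p r : ℕ) (x y z : ℤ) :
    Matrix.SpecialLinearGroup (Fin 4) (ZMod (p ^ r)) :=
  ⟨!![1, 0, 0, 0; 0, 1, (x : ZMod (p ^ r)), (z : ZMod (p ^ r));
      0, 0, 1, (y : ZMod (p ^ r)); 0, 0, 0, 1], by
    simp [Matrix.det_succ_row_zero, Fin.sum_univ_succ]⟩


def Gmat {R : Type*} [CommRing R] (a b c d : R) : Matrix (Fin 4) (Fin 4) R :=
  !![1, 0, 0, 0; 0, a, b, 0; 0, c, d, 0; 0, 0, 0, 1]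

lemma Gmat_mul {R : Type*} [CommRing R] (a b c d a' b' c' d' : R) :
    Gmat a b c d * Gmat a' b' c' d'
      = Gmat (a*a'+b*c') (a*b'+b*d') (c*a'+d*c') (c*b'+d*d') := by
  ext i j
  fin_cases i <;> fin_cases j <;>
    simp [Gmat, Matrix.mul_apply, Fin.sum_univ_four, Matrix.vecHead, Matrix.vecTail]

lemma Gmat_one {R : Type*} [CommRing R] : (Gmat 1 0 0 1 : Matrix (Fin 4) (Fin 4) R) = 1 := by
  ext i j
  fin_cases i <;> fin_cases j <;>
    simp [Gmat, Matrix.one_apply, Matrix.vecHead, Matrix.vecTail]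

lemma Gmat_det {R : Type*} [CommRing R] (a b c d : R) :
    Matrix.det (Gmat a b c d) = a*d - b*c := by
  simp [Gmat, Matrix.det_succ_row_zero, Fin.sum_univ_succ]
  ring

lemma conj_rel (p r : ℕ) (g : Matrix.SpecialLinearGroup (Fin 4) (ZMod (p ^ r)))
    (a b c d : ℤ)
    (hg : (g : Matrix (Fin 4) (Fin 4) (ZMod (p ^ r)))
        = Gmat (a : ZMod (p^r)) (b : ZMod (p^r)) (c : ZMod (p^r)) (d : ZMod (p^r)))
    (y z : ℤ) :
    g * xyzMat p r 0 y z = xyzMat p r 0 (c*z+d*y) (a*z+b*y) * g := by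
  apply Subtype.ext
  simp only [Matrix.SpecialLinearGroup.coe_mul, hg]
  ext i j
  fin_cases i <;> fin_cases j <;>
    (simp [xyzMat, Gmat, Matrix.mul_apply, Fin.sum_univ_four, Matrix.vecHead, Matrix.vecTail]
     <;> push_cast <;> ring)

noncomputable def eC (q : ℕ) (m : ℤ) : ℂ :=
  Complex.exp (2 * Real.pi * Complex.I * ((m : ℂ) / (q : ℂ)))

lemma eC_mul (q : ℕ) (m m' : ℤ) : eC q m * eC q m' = eC q (m + m') := by
  rw [eC, eC, eC, ← Complex.exp_add]
  congr 1
  push_cast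
  ring

lemma eC_conj (q : ℕ) (m : ℤ) : (starRingEnd ℂ) (eC q m) = eC q (-m) := by
  rw [eC, eC, ← Complex.exp_conj]
  congr 1
  have : ((2 * Real.pi * Complex.I * ((m : ℂ) / (q : ℂ)))) =
      (((2 * Real.pi * (m:ℝ) / (q:ℝ) : ℝ) : ℂ)) * Complex.I := by
    push_cast; ring
  rw [this, _root_.map_mul, Complex.conj_I, Complex.conj_ofReal]
  push_cast
  ring

lemma eC_zero (q : ℕ) : eC q 0 = 1 := by simp [eC]

lemma eC_eq_one_iff (q : ℕ) (hq : q ≠ 0) (m : ℤ) :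
    eC q m = 1 ↔ ((m : ZMod q) = 0) := by
  rw [eC, Complex.exp_eq_one_iff, ZMod.intCast_zmod_eq_zero_iff_dvd]
  have hπ : (2 * Real.pi * Complex.I : ℂ) ≠ 0 := by
    simp [Real.pi_ne_zero, Complex.I_ne_zero]
  have hq' : (q : ℂ) ≠ 0 := Nat.cast_ne_zero.mpr hq
  constructor
  · rintro ⟨n, hn⟩
    refine ⟨n, ?_⟩
    have h2 : (m : ℂ) / q = n :=
      mul_left_cancel₀ hπ (hn.trans (mul_comm _ _))
    have h3 : (m : ℂ) = (q : ℂ) * n := by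
      field_simp at h2
      linear_combination h2
    exact_mod_cast h3
  · rintro ⟨n, hn⟩
    refine ⟨n, ?_⟩
    rw [hn]
    push_cast
    field_simp

theorem stmt12 (p : ℕ) (hp : p.Prime) (r : ℕ) (hr : 1 ≤ r)
    {V : Type*} [NormedAddCommGroup V] [InnerProductSpace ℂ V]
    [FiniteDimensional ℂ V]
    (φ : Matrix.SpecialLinearGroup (Fin 4) (ZMod (p ^ r)) →* unitary (V →L[ℂ] V))
    (v : V) (hv : v ≠ 0)
    (hchar : ∀ x y z : ℤ,
      (φ (xyzMat p r x y z) : V →L[ℂ] V) v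
        = Complex.exp (2 * Real.pi * Complex.I * ((y : ℂ) / (p : ℂ) ^ r)) • v) :
    ∃ w : V, w ≠ 0 ∧ ∀ g : Matrix.SpecialLinearGroup (Fin 4) (ZMod (p ^ r)),
      (∃ a b c d : ZMod (p ^ r),
        (g : Matrix (Fin 4) (Fin 4) (ZMod (p ^ r)))
          = !![1, 0, 0, 0; 0, a, b, 0; 0, c, d, 0; 0, 0, 0, 1]) →
      (φ g : V →L[ℂ] V) w = w := by
  classical
  haveI : NeZero (p ^ r) := ⟨pow_ne_zero r hp.ne_zero⟩
  set A := Matrix.SpecialLinearGroup (Fin 4) (ZMod (p ^ r)) with hA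
  -- restate hchar with eC
  have hcast : ((p^r : ℕ) : ℂ) = (p : ℂ) ^ r := by push_cast; ring
  have hchar' : ∀ x y z : ℤ,
      (φ (xyzMat p r x y z) : V →L[ℂ] V) v = eC (p^r) y • v := by
    intro x y z
    rw [hchar x y z, eC, hcast]
  have hvalcast : ∀ u : ZMod (p^r), ((u.val : ℤ) : ZMod (p^r)) = u := by
    intro u
    push_cast
    simp [ZMod.natCast_val, ZMod.cast_id]
  -- unitarity
  have hinner : ∀ (U : unitary (V →L[ℂ] V)) (x y : V),
      (inner ℂ ((U : V →L[ℂ] V) x) ((U : V →L[ℂ] V) y) : ℂ) = inner ℂ x y := by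
    intro U x y
    have h : (inner ℂ (((star (U:V→L[ℂ] V) * (U:V→L[ℂ] V))) x) y : ℂ)
        = inner ℂ ((U:V→L[ℂ] V) x) ((U:V→L[ℂ] V) y) := by
      rw [ContinuousLinearMap.star_eq_adjoint, ContinuousLinearMap.mul_apply,
        ContinuousLinearMap.adjoint_inner_left]
    rw [← h, U.prop.1]
    simp
  have hmul : ∀ (g h : A) (x : V),
      (φ (g * h) : V →L[ℂ] V) x = (φ g : V →L[ℂ] V) ((φ h : V →L[ℂ] V) x) := by
    intro g h x
    rw [_root_.map_mul]
    rfl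
  -- the subgroup predicate
  set P : A → Prop := fun g => ∃ a b c d : ZMod (p ^ r),
      (g : Matrix (Fin 4) (Fin 4) (ZMod (p ^ r))) = Gmat a b c d with hP
  have hPmul : ∀ g h : A, P g → P h → P (g * h) := by
    rintro g h ⟨a, b, c, d, hg⟩ ⟨a', b', c', d', hh⟩
    exact ⟨_, _, _, _, by
      rw [Matrix.SpecialLinearGroup.coe_mul, hg, hh, Gmat_mul]⟩
  have hPdet : ∀ (g : A) (a b c d : ZMod (p^r)),
      (g : Matrix (Fin 4) (Fin 4) (ZMod (p ^ r))) = Gmat a b c d → a*d - b*c = 1 := by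
    intro g a b c d hg
    rw [← Gmat_det a b c d, ← hg]
    exact g.prop
  have hPinv : ∀ g : A, P g → P g⁻¹ := by
    rintro g ⟨a, b, c, d, hg⟩
    have hdet := hPdet g a b c d hg
    have hdet' : Matrix.det (Gmat d (-b) (-c) a) = 1 := by
      rw [Gmat_det]; linear_combination hdet
    set k : A := ⟨Gmat d (-b) (-c) a, hdet'⟩ with hk
    have hmk : g * k = 1 := by
      apply Subtype.ext
      rw [Matrix.SpecialLinearGroup.coe_mul, Matrix.SpecialLinearGroup.coe_one, hg]
      show Gmat a b c d * Gmat d (-b) (-c) a = 1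
      rw [Gmat_mul,
        show a*d + b*(-c) = 1 by linear_combination hdet,
        show a*(-b) + b*a = 0 by ring,
        show c*d + d*(-c) = 0 by ring,
        show c*(-b) + d*a = 1 by linear_combination hdet,
        Gmat_one]
    have : g⁻¹ = k := inv_eq_of_mul_eq_one_right hmk
    exact ⟨d, -b, -c, a, by rw [this]⟩
  have hPone : P 1 := ⟨1, 0, 0, 1, by
    rw [Matrix.SpecialLinearGroup.coe_one, Gmat_one]⟩
  set S : Finset A := Finset.univ.filter P with hS
  set w : V := ∑ g ∈ S, (φ g : V →L[ℂ] V) v with hw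
  -- the key orthogonality dichotomy
  have key : ∀ g ∈ S, ((φ g : V →L[ℂ] V) v = v) ∨
      (inner ℂ ((φ g : V →L[ℂ] V) v) v = (0 : ℂ)) := by
    intro g hgS
    rw [hS, Finset.mem_filter] at hgS
    obtain ⟨-, a₀, b₀, c₀, d₀, hg⟩ := hgS
    have hg' : (g : Matrix (Fin 4) (Fin 4) (ZMod (p ^ r)))
        = Gmat ((a₀.val : ℤ) : ZMod (p^r)) ((b₀.val : ℤ) : ZMod (p^r))
            ((c₀.val : ℤ) : ZMod (p^r)) ((d₀.val : ℤ) : ZMod (p^r)) := by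
      rw [hg, hvalcast a₀, hvalcast b₀, hvalcast c₀, hvalcast d₀]
    set u : V := (φ g : V →L[ℂ] V) v with hu
    have spec : ∀ y z : ℤ,
        (φ (xyzMat p r 0 ((c₀.val : ℤ)*z + (d₀.val : ℤ)*y)
            ((a₀.val : ℤ)*z + (b₀.val : ℤ)*y)) : V →L[ℂ] V) u = eC (p^r) y • u := by
      intro y z
      have hrel := conj_rel p r g _ _ _ _ hg' y z
      rw [hu, ← hmul, ← hrel, hmul, hchar' 0 y z, _root_.map_smul]
    by_cases hc : c₀ = 0
    · by_cases hd : d₀ = 1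
      · left
        have hdet := hPdet g a₀ b₀ c₀ d₀ hg
        have ha : a₀ = 1 := by rw [hc, hd] at hdet; simpa using hdet
        have hgx : g = xyzMat p r (b₀.val : ℤ) 0 0 := by
          apply Subtype.ext
          rw [hg, ha, hc, hd]
          ext i j
          fin_cases i <;> fin_cases j <;>
            simp [Gmat, xyzMat, Matrix.vecHead, Matrix.vecTail, hvalcast b₀]
        rw [hu, hgx, hchar', eC_zero, one_smul]
      · right
        have h1 := spec 1 0
        simp only [mul_zero, mul_one, zero_add] at h1
        have h2 := hchar' 0 ((d₀.val : ℤ)) ((b₀.val : ℤ))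
        have h3 : (inner ℂ u v : ℂ) = inner ℂ ((φ (xyzMat p r 0 (d₀.val : ℤ) (b₀.val : ℤ)) : V →L[ℂ] V) u)
            ((φ (xyzMat p r 0 (d₀.val : ℤ) (b₀.val : ℤ)) : V →L[ℂ] V) v) :=
          (hinner _ u v).symm
        rw [h1, h2, inner_smul_left, inner_smul_right, eC_conj, ← mul_assoc, eC_mul] at h3
        have hne : eC (p^r) (-1 + (d₀.val : ℤ)) ≠ 1 := by
          intro hcon
          rw [eC_eq_one_iff _ (pow_ne_zero r hp.ne_zero)] at hcon
          push_cast [ZMod.natCast_val, ZMod.cast_id] at hcon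
          exact hd (by linear_combination hcon)
        have : (eC (p^r) (-1 + (d₀.val : ℤ)) - 1) * inner ℂ u v = 0 := by
          linear_combination -h3
        rcases mul_eq_zero.mp this with h | h
        · exact absurd (by linear_combination h) hne
        · exact h
    · right
      have h1 := spec 0 1
      simp only [mul_zero, mul_one, add_zero] at h1
      rw [eC_zero, one_smul] at h1
      have h2 := hchar' 0 ((c₀.val : ℤ)) ((a₀.val : ℤ))
      have h3 : (inner ℂ u v : ℂ) = inner ℂ ((φ (xyzMat p r 0 (c₀.val : ℤ) (a₀.val : ℤ)) : V →L[ℂ] V) u)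
          ((φ (xyzMat p r 0 (c₀.val : ℤ) (a₀.val : ℤ)) : V →L[ℂ] V) v) :=
        (hinner _ u v).symm
      rw [h1, h2, inner_smul_right] at h3
      have hne : eC (p^r) ((c₀.val : ℤ)) ≠ 1 := by
        intro hcon
        rw [eC_eq_one_iff _ (pow_ne_zero r hp.ne_zero)] at hcon
        push_cast [ZMod.natCast_val, ZMod.cast_id] at hcon
        exact hc hcon
      have : (eC (p^r) ((c₀.val : ℤ)) - 1) * inner ℂ u v = 0 := by
        linear_combination -h3
      rcases mul_eq_zero.mp this with h | h
      · exact absurd (by linear_combination h) hne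
      · exact h
  -- w is nonzero
  have honeS : (1 : A) ∈ S := by
    rw [hS, Finset.mem_filter]
    exact ⟨Finset.mem_univ _, hPone⟩
  have hwv : (inner ℂ w v : ℂ) = ∑ g ∈ S, inner ℂ ((φ g : V →L[ℂ] V) v) v := by
    rw [hw]
    exact sum_inner S _ v
  have hterm_nonneg : ∀ g ∈ S, 0 ≤ (inner ℂ ((φ g : V →L[ℂ] V) v) v : ℂ).re := by
    intro g hgS
    rcases key g hgS with h | h
    · rw [h]
      exact inner_self_nonneg (𝕜 := ℂ) (x := v)
    · rw [h]
      simp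
  have hterm_one : 0 < (inner ℂ ((φ (1:A) : V →L[ℂ] V) v) v : ℂ).re := by
    have : (φ (1:A) : V →L[ℂ] V) v = v := by rw [_root_.map_one]; rfl
    rw [this]
    show 0 < RCLike.re (inner ℂ v v : ℂ)
    rw [inner_self_eq_norm_sq]
    exact pow_pos (norm_pos_iff.mpr hv) 2
  have hwre : 0 < (inner ℂ w v : ℂ).re := by
    rw [hwv, Complex.re_sum]
    exact Finset.sum_pos' hterm_nonneg ⟨1, honeS, hterm_one⟩
  have hwne : w ≠ 0 := by
    intro h0
    rw [h0] at hwre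
    simp at hwre
  refine ⟨w, hwne, ?_⟩
  -- invariance
  intro h hPh
  have hPh' : P h := hPh
  have : (φ h : V →L[ℂ] V) w = ∑ g ∈ S, (φ (h * g) : V →L[ℂ] V) v := by
    rw [hw, map_sum]
    exact Finset.sum_congr rfl fun g _ => (hmul h g v).symm
  rw [this, hw]
  apply Finset.sum_equiv (Equiv.mulLeft h)
  · intro g
    simp only [hS, Finset.mem_filter, Finset.mem_univ, true_and, Equiv.coe_mulLeft]
    constructor
    · intro hg
      exact hPmul _ _ hPh' hg
    · intro hg
      have := hPmul _ _ (hPinv h hPh') hg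
      rwa [inv_mul_cancel_left] at this
  · intro g hg
    simp
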